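/- arXiv:1310.0545 — 4 statements merged into one kernel-verified Lean document; each statement's English description precedes it below -/
import Mathlib

section
/- Let V = ⊕_{n ≥ n₀} V_n (n₀ ∈ ℤ) be a ℤ-graded complex vector space whose grading is bounded below, equipped with bilinear products (u,v) ↦ u(k)v for each k ∈ ℤ such that u(k)v ∈ V_{j+m−k−1} whenever u ∈ V_j and v ∈ V_m, and suppose the commutator formula holds. Then: (a) the product [u,v] := u(0)v satisfies the left Leibniz identity [u,[v,w]] = [[u,v],w] + [v,[u,w]] for all u,v,w ∈ V; (b) the subspaces ⊕_{n≤0} V_n, V_1, and ⊕_{n≥2} V_n are each closed under this product; (c) W := ⊕_{n≤0} V_n is nilpotent as a Leibniz algebra: every iterated bracket (in any arrangement of parentheses) of more than 1−n₀ elements of W is zero. -/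
/-- Iterated brackets (with arbitrary arrangement of parentheses) of elements of `W`;
`IsIterBracket br W m x` means that `x` is an iterated bracket of `m` elements of `W`. -/
inductive IsIterBracket {V : Type*} (br : V → V → V) (W : Set V) : ℕ → V → Prop
  | base (w : V) (hw : w ∈ W) : IsIterBracket br W 1 w
  | node {m n : ℕ} {u v : V} (hu : IsIterBracket br W m u)
      (hv : IsIterBracket br W n v) : IsIterBracket br W (m + n) (br u v)

/-- Let `V = ⊕_{n ≥ n₀} V n` be a ℤ-graded complex vector space whose grading is bounded
below, with bilinear products `mul k` such that `u(k)v ∈ V_{j+m-k-1}` for `u ∈ V_j`,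
`v ∈ V_m`, satisfying the commutator formula.  Then (a) `u(0)v` satisfies the left Leibniz
identity; (b) `⊕_{n≤0} V_n`, `V_1`, and `⊕_{n≥2} V_n` are closed under the `0`-th product;
(c) `W = ⊕_{n≤0} V_n` is nilpotent: any iterated bracket of more than `1 - n₀` elements
of `W` vanishes. -/
theorem stmt0
    (V : Type*) [AddCommGroup V] [Module ℂ V]
    (n₀ : ℤ) (Vn : ℤ → Submodule ℂ V)
    (hdecomp : DirectSum.IsInternal Vn)
    (hbdd : ∀ n : ℤ, n < n₀ → Vn n = ⊥)
    (mul : ℤ → V →ₗ[ℂ] V →ₗ[ℂ] V)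
    (hgrade : ∀ (k j m : ℤ) (u v : V), u ∈ Vn j → v ∈ Vn m →
      mul k u v ∈ Vn (j + m - k - 1))
    (hcomm : ∀ (p q : ℤ) (u v w : V) (N : ℕ),
      (∀ i : ℕ, N ≤ i → mul (i : ℤ) u v = 0) →
      mul p u (mul q v w) - mul q v (mul p u w) =
        ∑ i ∈ Finset.range N,
          (Ring.choose p i : ℂ) • mul (p + q - (i : ℤ)) (mul (i : ℤ) u v) w) :
    (∀ u v w : V,
        mul 0 u (mul 0 v w) = mul 0 (mul 0 u v) w + mul 0 v (mul 0 u w)) ∧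
    (∀ u v : V, u ∈ (⨆ n ∈ {n : ℤ | n ≤ 0}, Vn n) → v ∈ (⨆ n ∈ {n : ℤ | n ≤ 0}, Vn n) →
        mul 0 u v ∈ (⨆ n ∈ {n : ℤ | n ≤ 0}, Vn n)) ∧
    (∀ u v : V, u ∈ Vn 1 → v ∈ Vn 1 → mul 0 u v ∈ Vn 1) ∧
    (∀ u v : V, u ∈ (⨆ n ∈ {n : ℤ | 2 ≤ n}, Vn n) → v ∈ (⨆ n ∈ {n : ℤ | 2 ≤ n}, Vn n) →
        mul 0 u v ∈ (⨆ n ∈ {n : ℤ | 2 ≤ n}, Vn n)) ∧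
    (∀ (m : ℕ) (x : V), (1 - n₀ : ℤ) < (m : ℤ) →
        IsIterBracket (fun u v => mul 0 u v)
          ((⨆ n ∈ {n : ℤ | n ≤ 0}, Vn n : Submodule ℂ V) : Set V) m x → x = 0) := by
  -- an induction principle for membership in `⨆ n ∈ S, Vn n`
  have hsup : ∀ (S : Set ℤ) (C : V → Prop), (∀ n ∈ S, ∀ x ∈ Vn n, C x) → C 0 →
      (∀ x y, C x → C y → C (x + y)) → ∀ x, x ∈ (⨆ n ∈ S, Vn n) → C x := by
    intro S C hmem h0 hadd x hx
    refine Submodule.iSup_induction (motive := C) (fun n => ⨆ _ : n ∈ S, Vn n) hx ?_ h0 hadd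
    intro n y hy
    by_cases h : n ∈ S
    · exact hmem n h y (by simpa [iSup_pos h] using hy)
    · have hy0 : y = 0 := by simpa [iSup_neg h] using hy
      simpa [hy0] using h0
  have htop : (⨆ n, Vn n) = ⊤ := hdecomp.submodule_iSup_eq_top
  -- vanishing of high products
  have hvanish : ∀ u v : V, ∃ N : ℕ, ∀ i : ℕ, N ≤ i → mul (i : ℤ) u v = 0 := by
    have key : ∀ u : V, u ∈ (⨆ n, Vn n) →
        ∀ v : V, v ∈ (⨆ n, Vn n) → ∃ N : ℕ, ∀ i : ℕ, N ≤ i → mul (i : ℤ) u v = 0 := by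
      intro u hu
      refine Submodule.iSup_induction
        (motive := fun u => ∀ v : V, v ∈ (⨆ n, Vn n) → ∃ N : ℕ, ∀ i : ℕ, N ≤ i → mul (i : ℤ) u v = 0)
        Vn hu ?_ ?_ ?_
      · intro j x hx v hv
        refine Submodule.iSup_induction
          (motive := fun v => ∃ N : ℕ, ∀ i : ℕ, N ≤ i → mul (i : ℤ) x v = 0) Vn hv ?_ ?_ ?_
        · intro m y hy
          refine ⟨(j + m - n₀).toNat, fun i hi => ?_⟩
          have h1 : j + m - n₀ ≤ (i : ℤ) := by
            calc j + m - n₀ ≤ ((j + m - n₀).toNat : ℤ) := Int.self_le_toNat _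
            _ ≤ (i : ℤ) := by exact_mod_cast hi
          have h2 : j + m - (i : ℤ) - 1 < n₀ := by omega
          have := hgrade (i : ℤ) j m x y hx hy
          rw [hbdd _ h2, Submodule.mem_bot] at this
          exact this
        · exact ⟨0, fun i _ => by simp⟩
        · rintro a b ⟨Na, hNa⟩ ⟨Nb, hNb⟩
          refine ⟨max Na Nb, fun i hi => ?_⟩
          rw [map_add, hNa i (le_of_max_le_left hi), hNb i (le_of_max_le_right hi), add_zero]
      · exact fun v _ => ⟨0, fun i _ => by simp⟩
      · intro a b ha hb v hv
        obtain ⟨Na, hNa⟩ := ha v hv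
        obtain ⟨Nb, hNb⟩ := hb v hv
        refine ⟨max Na Nb, fun i hi => ?_⟩
        rw [map_add, LinearMap.add_apply,
          hNa i (le_of_max_le_left hi), hNb i (le_of_max_le_right hi), add_zero]
    intro u v
    exact key u (htop ▸ Submodule.mem_top) v (htop ▸ Submodule.mem_top)
  -- part (a)
  have parta : ∀ u v w : V,
      mul 0 u (mul 0 v w) = mul 0 (mul 0 u v) w + mul 0 v (mul 0 u w) := by
    intro u v w
    obtain ⟨N, hN⟩ := hvanish u v
    have h := hcomm 0 0 u v w (N + 1) (fun i hi => hN i (by omega))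
    rw [Finset.sum_eq_single 0 ?_ ?_] at h
    · have h0 : Ring.choose (((0 : ℤ) : ℂ)) 0 = 1 := by
        rw [Ring.choose_zero_right]
      rw [h0, one_smul] at h
      norm_num at h
      exact sub_eq_iff_eq_add.mp h
    · intro i _ hi
      have hc : Ring.choose (((0 : ℤ) : ℂ)) i = 0 := by
        rw [Int.cast_zero, show (0 : ℂ) = ((0 : ℕ) : ℂ) by norm_num, Ring.choose_natCast]
        exact_mod_cast Nat.choose_eq_zero_of_lt (Nat.pos_of_ne_zero hi)
      rw [hc, zero_smul]
    · intro h0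
      simp at h0
  -- a graded product lemma for lower truncations
  have hWmul : ∀ (a b : ℤ) (u v : V), u ∈ (⨆ n ∈ {n : ℤ | n ≤ a}, Vn n) →
      v ∈ (⨆ n ∈ {n : ℤ | n ≤ b}, Vn n) →
      mul 0 u v ∈ (⨆ n ∈ {n : ℤ | n ≤ a + b - 1}, Vn n) := by
    intro a b u v hu hv
    refine hsup _ (fun u => mul 0 u v ∈ (⨆ n ∈ {n : ℤ | n ≤ a + b - 1}, Vn n)) ?_ ?_ ?_ u hu
    · intro j hj x hx
      refine hsup _ (fun v => mul 0 x v ∈ (⨆ n ∈ {n : ℤ | n ≤ a + b - 1}, Vn n)) ?_ ?_ ?_ v hv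
      · intro m hm y hy
        have h := hgrade 0 j m x y hx hy
        have hle : j + m - 0 - 1 ≤ a + b - 1 := by
          simp only [Set.mem_setOf_eq] at hj hm; omega
        exact le_iSup₂ (f := fun (n : ℤ) (_ : n ∈ {n : ℤ | n ≤ a + b - 1}) => Vn n)
          (j + m - 0 - 1) hle h
      · simp
      · intro x' y' hx' hy'
        rw [map_add]
        exact Submodule.add_mem _ hx' hy'
    · simp
    · intro x' y' hx' hy'
      rw [map_add, LinearMap.add_apply]
      exact Submodule.add_mem _ hx' hy'
  refine ⟨parta, ?_, ?_, ?_, ?_⟩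
  · -- (b1)
    intro u v hu hv
    have h := hWmul 0 0 u v hu hv
    refine SetLike.le_def.mp ?_ h
    refine iSup₂_le fun n hn => ?_
    exact le_iSup₂ (f := fun (n : ℤ) (_ : n ∈ {n : ℤ | n ≤ 0}) => Vn n) n
      (by simp only [Set.mem_setOf_eq] at hn ⊢; omega)
  · -- (b2)
    intro u v hu hv
    have := hgrade 0 1 1 u v hu hv
    norm_num at this
    exact this
  · -- (b3)
    intro u v hu hv
    refine hsup _ (fun u => mul 0 u v ∈ (⨆ n ∈ {n : ℤ | 2 ≤ n}, Vn n)) ?_ ?_ ?_ u hu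
    · intro j hj x hx
      refine hsup _ (fun v => mul 0 x v ∈ (⨆ n ∈ {n : ℤ | 2 ≤ n}, Vn n)) ?_ ?_ ?_ v hv
      · intro m hm y hy
        have h := hgrade 0 j m x y hx hy
        exact le_iSup₂ (f := fun (n : ℤ) (_ : n ∈ {n : ℤ | 2 ≤ n}) => Vn n)
          (j + m - 0 - 1) (by simp only [Set.mem_setOf_eq] at hj hm ⊢; omega) h
      · simp
      · intro x' y' hx' hy'
        rw [map_add]
        exact Submodule.add_mem _ hx' hy'
    · simp
    · intro x' y' hx' hy'
      rw [map_add, LinearMap.add_apply]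
      exact Submodule.add_mem _ hx' hy'
  · -- (c)
    intro m x hm hx
    have hiter : ∀ (k : ℕ) (y : V), IsIterBracket (fun u v => mul 0 u v)
        ((⨆ n ∈ {n : ℤ | n ≤ 0}, Vn n : Submodule ℂ V) : Set V) k y →
        y ∈ (⨆ n ∈ {n : ℤ | n ≤ 1 - (k : ℤ)}, Vn n) := by
      intro k y hy
      induction hy with
      | base w hw =>
        have : ((1 : ℤ) - ((1 : ℕ) : ℤ)) = 0 := by norm_num
        rw [this]
        exact hw
      | node hu hv ih1 ih2 =>
        rename_i k1 k2 u' v'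
        have heq : (1 : ℤ) - ((k1 + k2 : ℕ) : ℤ) =
            (1 - (k1 : ℤ)) + (1 - (k2 : ℤ)) - 1 := by push_cast; ring
        rw [heq]
        exact hWmul _ _ _ _ ih1 ih2
    have hx' := hiter m x hx
    have hbot : (⨆ n ∈ {n : ℤ | n ≤ 1 - (m : ℤ)}, Vn n) = ⊥ := by
      refine le_bot_iff.mp (iSup₂_le fun n hn => ?_)
      simp only [Set.mem_setOf_eq] at hn
      rw [hbdd n (by omega)]
    rw [hbot, Submodule.mem_bot] at hx'
    exact hx'
end

section
/- Let V be a complex vector space with bilinear products u(k)v (k ∈ ℤ) that are truncated (for all u,v there is N with u(k)v = 0 for all k ≥ N) and satisfy the commutator formula. Let S and W be subspaces of V such that: (i) every element of S is a linear combination of elements of the form a(0)b with a,b ∈ S; and (ii) u(k)w = 0 for all u ∈ S, w ∈ W and all k ≥ 0. Then the corresponding operators commute: u(m)(w(n)x) = w(n)(u(m)x) for all u ∈ S, w ∈ W, all m,n ∈ ℤ, and all x ∈ V. -/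
/-- Let `V` be a complex vector space with bilinear products `mul k` (`k ∈ ℤ`) that are
truncated and satisfy the commutator formula.  Let `S` and `W` be subspaces such that
(i) every element of `S` is a linear combination of elements `mul 0 a b` with `a, b ∈ S`,
and (ii) `mul k u w = 0` for all `u ∈ S`, `w ∈ W`, `k ≥ 0`.  Then the corresponding
operators commute: `u(m)(w(n)x) = w(n)(u(m)x)` for `u ∈ S`, `w ∈ W`, `m, n ∈ ℤ`, `x ∈ V`. -/
theorem stmt3
    (V : Type*) [AddCommGroup V] [Module ℂ V]
    (mul : ℤ → V →ₗ[ℂ] V →ₗ[ℂ] V)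
    (htrunc : ∀ u v : V, ∃ N : ℤ, ∀ k : ℤ, N ≤ k → mul k u v = 0)
    (hcomm : ∀ (p q : ℤ) (u v w : V) (N : ℕ),
      (∀ i : ℕ, N ≤ i → mul (i : ℤ) u v = 0) →
      mul p u (mul q v w) - mul q v (mul p u w) =
        ∑ i ∈ Finset.range N,
          (Ring.choose p i : ℂ) • mul (p + q - (i : ℤ)) (mul (i : ℤ) u v) w)
    (S W : Submodule ℂ V)
    (hS : S ≤ Submodule.span ℂ {x : V | ∃ a ∈ S, ∃ b ∈ S, x = mul 0 a b})
    (hSW : ∀ u ∈ S, ∀ w ∈ W, ∀ k : ℕ, mul (k : ℤ) u w = 0) :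
    ∀ u ∈ S, ∀ w ∈ W, ∀ (m n : ℤ) (x : V),
      mul m u (mul n w x) = mul n w (mul m u x) := by
  intro u hu w hw m n x
  have h := hcomm m n u w x 0 (fun i _ => hSW u hu w hw i)
  simp only [Finset.range_zero, Finset.sum_empty] at h
  exact sub_eq_zero.mp h
end

section
/- Let E be a real inner product space, L ⊆ E an additive subgroup, and h ∈ E such that (2h,α) ≤ (α,α) for every α ∈ L. Set A := {α ∈ L : (α,α) = (2h,α)}. Then for all α, β ∈ A one has (α,β) ≥ 0, and moreover (α,β) = 0 if and only if α + β ∈ A. -/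
/-- Let `E` be a real inner product space, `L ⊆ E` an additive subgroup and `h ∈ E` such
that `(2h, α) ≤ (α, α)` for every `α ∈ L`.  Let `A = {α ∈ L : (α, α) = (2h, α)}`.  Then
for all `α, β ∈ A` one has `(α, β) ≥ 0`, and `(α, β) = 0` iff `α + β ∈ A`. -/
theorem stmt5 (E : Type*) [NormedAddCommGroup E] [InnerProductSpace ℝ E]
    (L : AddSubgroup E) (h : E)
    (hle : ∀ α ∈ L, (inner ℝ ((2 : ℝ) • h) α : ℝ) ≤ (inner ℝ α α : ℝ))
    (A : Set E)
    (hA : A = {α : E | α ∈ L ∧ (inner ℝ α α : ℝ) = (inner ℝ ((2 : ℝ) • h) α : ℝ)}) :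
    ∀ α ∈ A, ∀ β ∈ A,
      (0 ≤ (inner ℝ α β : ℝ)) ∧ ((inner ℝ α β : ℝ) = 0 ↔ α + β ∈ A) := by
  subst hA
  rintro α ⟨hαL, hα⟩ β ⟨hβL, hβ⟩
  have hmem : α + β ∈ L := L.add_mem hαL hβL
  have key := hle (α + β) hmem
  have e1 : (inner ℝ (α + β) (α + β) : ℝ)
      = inner ℝ α α + 2 * inner ℝ α β + inner ℝ β β := real_inner_add_add_self α β
  have e2 : (inner ℝ ((2 : ℝ) • h) (α + β) : ℝ)
      = inner ℝ ((2 : ℝ) • h) α + inner ℝ ((2 : ℝ) • h) β := inner_add_right _ _ _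
  constructor
  · linarith [key, e1, e2, hα, hβ]
  · constructor
    · intro h0
      refine ⟨hmem, ?_⟩
      rw [e1, e2, h0]
      linarith [hα, hβ]
    · rintro ⟨-, heq⟩
      rw [e1, e2] at heq
      linarith [hα, hβ, heq]
end

section
/- Let (A, B) be a commutative Frobenius ℂ-algebra that is a local ring with maximal ideal m and residue field ℂ. Let D : A → A be a diagonalizable derivation whose 0-eigenspace is exactly ℂ·1, and suppose there is ν ∈ ℂ such that B(Da,b) + B(a,Db) = ν·B(a,b) for all a,b ∈ A. For λ ∈ ℂ write A^λ for the λ-eigenspace of D. Then: (i) A^λ · A^μ ⊆ A^{λ+μ} for all λ,μ; (ii) B(A^λ, A^μ) = 0 whenever λ + μ ≠ ν; (iii) for every λ the restriction of B to A^λ × A^{ν−λ} is a perfect pairing; (iv) the ν-eigenspace A^ν is one-dimensional and equals Ann_A(m), the unique minimal nonzero ideal of A. -/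
open Module

private theorem stmt11.prod {A : Type*} [CommRing A] [Algebra ℂ A]
    (D : A →ₗ[ℂ] A) (hder : ∀ a b : A, D (a * b) = D a * b + a * D b)
    (lam μ : ℂ) {a b : A} (ha : a ∈ Module.End.eigenspace D lam)
    (hb : b ∈ Module.End.eigenspace D μ) :
    a * b ∈ Module.End.eigenspace D (lam + μ) := by
  rw [Module.End.mem_eigenspace_iff] at ha hb ⊢
  rw [hder, ha, hb, smul_mul_assoc, mul_smul_comm, add_smul]

private theorem stmt11.orth {A : Type*} [CommRing A] [Algebra ℂ A]
    (B : A →ₗ[ℂ] A →ₗ[ℂ] ℂ) (D : A →ₗ[ℂ] A) (ν : ℂ)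
    (hcompat : ∀ a b : A, B (D a) b + B a (D b) = ν * B a b)
    {lam μ : ℂ} (h : lam + μ ≠ ν) {a b : A}
    (ha : a ∈ Module.End.eigenspace D lam) (hb : b ∈ Module.End.eigenspace D μ) :
    B a b = 0 := by
  rw [Module.End.mem_eigenspace_iff] at ha hb
  have h1 := hcompat a b
  rw [ha, hb] at h1
  simp only [map_smul, LinearMap.smul_apply, smul_eq_mul] at h1
  have h2 : (lam + μ - ν) * B a b = 0 := by linear_combination h1
  rcases mul_eq_zero.mp h2 with h3 | h3
  · exact absurd (sub_eq_zero.mp h3) h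
  · exact h3

private theorem stmt11.left {A : Type*} [CommRing A] [Algebra ℂ A]
    (B : A →ₗ[ℂ] A →ₗ[ℂ] ℂ)
    (hnd : ∀ a : A, (∀ b : A, B a b = 0) → a = 0)
    (D : A →ₗ[ℂ] A)
    (hdiag : ⨆ μ : ℂ, Module.End.eigenspace D μ = ⊤) (ν : ℂ)
    (hcompat : ∀ a b : A, B (D a) b + B a (D b) = ν * B a b)
    {lam : ℂ} {a : A} (ha : a ∈ Module.End.eigenspace D lam)
    (h : ∀ b ∈ Module.End.eigenspace D (ν - lam), B a b = 0) : a = 0 := by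
  apply hnd
  intro b
  have hb : b ∈ ⨆ μ : ℂ, Module.End.eigenspace D μ := by rw [hdiag]; trivial
  refine Submodule.iSup_induction (motive := fun z => B a z = 0) _ hb ?_ (map_zero _) ?_
  · intro μ x hx
    by_cases hc : lam + μ = ν
    · exact h x (by rwa [show μ = ν - lam by rw [← hc]; ring] at hx)
    · exact stmt11.orth B D ν hcompat hc ha hx
  · intro x y hx hy; rw [map_add, hx, hy, add_zero]

private theorem stmt11.dimle {A : Type*} [CommRing A] [Algebra ℂ A] [FiniteDimensional ℂ A]
    (B : A →ₗ[ℂ] A →ₗ[ℂ] ℂ)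
    (hnd : ∀ a : A, (∀ b : A, B a b = 0) → a = 0)
    (D : A →ₗ[ℂ] A)
    (hdiag : ⨆ μ : ℂ, Module.End.eigenspace D μ = ⊤) (ν : ℂ)
    (hcompat : ∀ a b : A, B (D a) b + B a (D b) = ν * B a b)
    (lam : ℂ) :
    finrank ℂ (Module.End.eigenspace D lam) ≤
      finrank ℂ (Module.End.eigenspace D (ν - lam)) := by
  set W := Module.End.eigenspace D (ν - lam) with hW
  let Φ : Module.End.eigenspace D lam →ₗ[ℂ] Module.Dual ℂ W :=
    B.domRestrict₁₂ _ _
  have hinj : Function.Injective Φ := by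
    rw [← LinearMap.ker_eq_bot]
    apply LinearMap.ker_eq_bot'.mpr
    intro x hx
    have hx0 : (x : A) = 0 := by
      apply stmt11.left B hnd D hdiag ν hcompat x.2
      intro b hb
      have := DFunLike.congr_fun hx (⟨b, hb⟩ : W)
      simpa [Φ, LinearMap.domRestrict₁₂_apply] using this
    exact Subtype.ext hx0
  calc finrank ℂ (Module.End.eigenspace D lam) ≤ finrank ℂ (Module.Dual ℂ W) :=
        LinearMap.finrank_le_finrank_of_injective hinj
    _ = finrank ℂ W := Subspace.dual_finrank_eq

/-- Let `(A, B)` be a commutative Frobenius ℂ-algebra which is a local ring with maximal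
ideal `m` and residue field ℂ.  Let `D` be a diagonalizable derivation of `A` whose
`0`-eigenspace is exactly `ℂ·1`, and suppose `ν ∈ ℂ` satisfies
`B(Da, b) + B(a, Db) = ν B(a, b)`.  Writing `A^λ` for the `λ`-eigenspace of `D`:
(i) `A^λ · A^μ ⊆ A^{λ+μ}`; (ii) `B(A^λ, A^μ) = 0` whenever `λ + μ ≠ ν`; (iii) for every
`λ` the restriction of `B` to `A^λ × A^{ν-λ}` is a perfect pairing (separating on both
sides, with equal dimensions); (iv) `A^ν` is one-dimensional and equals `Ann_A(m)`, the
unique minimal nonzero ideal of `A`. -/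
theorem stmt11
    (A : Type*) [CommRing A] [Algebra ℂ A] [FiniteDimensional ℂ A]
    (B : A →ₗ[ℂ] A →ₗ[ℂ] ℂ)
    (hsymm : ∀ a b : A, B a b = B b a)
    (hnd : ∀ a : A, (∀ b : A, B a b = 0) → a = 0)
    (hfrob : ∀ a b c : A, B (a * b) c = B a (b * c))
    (m : Ideal A) (hm : m ≠ ⊤)
    (hloc : ∀ I : Ideal A, I ≠ ⊤ → I ≤ m)
    (hres : ∀ a : A, ∃ c : ℂ, a - algebraMap ℂ A c ∈ m)
    (D : A →ₗ[ℂ] A)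
    (hder : ∀ a b : A, D (a * b) = D a * b + a * D b)
    (hdiag : ⨆ μ : ℂ, Module.End.eigenspace D μ = ⊤)
    (hzero : Module.End.eigenspace D 0 = Submodule.span ℂ {(1 : A)})
    (ν : ℂ)
    (hcompat : ∀ a b : A, B (D a) b + B a (D b) = ν * B a b) :
    (∀ lam μ : ℂ, ∀ a ∈ Module.End.eigenspace D lam, ∀ b ∈ Module.End.eigenspace D μ,
        a * b ∈ Module.End.eigenspace D (lam + μ)) ∧
    (∀ lam μ : ℂ, lam + μ ≠ ν →
        ∀ a ∈ Module.End.eigenspace D lam, ∀ b ∈ Module.End.eigenspace D μ, B a b = 0) ∧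
    (∀ lam : ℂ,
      (∀ a ∈ Module.End.eigenspace D lam,
          (∀ b ∈ Module.End.eigenspace D (ν - lam), B a b = 0) → a = 0) ∧
      (∀ b ∈ Module.End.eigenspace D (ν - lam),
          (∀ a ∈ Module.End.eigenspace D lam, B a b = 0) → b = 0) ∧
      Module.finrank ℂ (Module.End.eigenspace D lam) =
        Module.finrank ℂ (Module.End.eigenspace D (ν - lam))) ∧
    (Module.finrank ℂ (Module.End.eigenspace D ν) = 1 ∧
      ((Module.End.eigenspace D ν : Set A) = {a : A | ∀ x ∈ m, a * x = 0}) ∧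
      (∀ I : Ideal A, I ≠ ⊥ → (Module.End.eigenspace D ν : Set A) ⊆ (I : Set A))) := by
  classical
  have h01 : (1 : A) ≠ 0 := by
    intro h
    exact hm ((Ideal.eq_top_iff_one m).mpr (h ▸ m.zero_mem))
  haveI : Nontrivial A := nontrivial_of_ne 1 0 h01
  have part3 : ∀ lam : ℂ,
      (∀ a ∈ Module.End.eigenspace D lam,
          (∀ b ∈ Module.End.eigenspace D (ν - lam), B a b = 0) → a = 0) ∧
      (∀ b ∈ Module.End.eigenspace D (ν - lam),
          (∀ a ∈ Module.End.eigenspace D lam, B a b = 0) → b = 0) ∧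
      Module.finrank ℂ (Module.End.eigenspace D lam) =
        Module.finrank ℂ (Module.End.eigenspace D (ν - lam)) := by
    intro lam
    refine ⟨fun a ha h => stmt11.left B hnd D hdiag ν hcompat ha h, ?_, ?_⟩
    · intro b hb h
      apply stmt11.left B hnd D hdiag ν hcompat hb
      intro c hc
      rw [sub_sub_cancel] at hc
      rw [hsymm]; exact h c hc
    · refine le_antisymm (stmt11.dimle B hnd D hdiag ν hcompat lam) ?_
      have := stmt11.dimle B hnd D hdiag ν hcompat (ν - lam)
      rwa [sub_sub_cancel] at this
  -- dimension of the ν-eigenspace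
  have dimE0 : finrank ℂ (Module.End.eigenspace D 0) = 1 := by
    rw [hzero]; exact finrank_span_singleton h01
  have dimEν : finrank ℂ (Module.End.eigenspace D ν) = 1 := by
    have h3 := (part3 0).2.2
    rw [sub_zero] at h3
    rw [← h3]; exact dimE0
  -- nilpotency of eigenvectors with nonzero eigenvalue
  have hnil : ∀ (μ : ℂ), μ ≠ 0 → ∀ a ∈ Module.End.eigenspace D μ, IsNilpotent a := by
    intro μ hμ a ha
    by_contra hna
    have hpow : ∀ n : ℕ, a ^ n ≠ 0 := fun n h => hna ⟨n, h⟩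
    have hmem : ∀ n : ℕ, a ^ (n + 1) ∈ Module.End.eigenspace D (((n : ℂ) + 1) * μ) := by
      intro n
      induction n with
      | zero => simpa using ha
      | succ k ih =>
          have h2 := stmt11.prod D hder _ μ ih ha
          have h3 : ((k : ℂ) + 1 + 1) * μ = ((k : ℂ) + 1) * μ + μ := by ring
          rw [pow_succ]
          convert h2 using 2
          push_cast
          ring
    set d := finrank ℂ A with hd
    have hli : LinearIndependent ℂ (fun i : Fin (d + 1) => a ^ ((i : ℕ) + 1)) := by
      apply Module.End.eigenvectors_linearIndependent' (D : Module.End ℂ A)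
        (fun i : Fin (d + 1) => (((i : ℕ) : ℂ) + 1) * μ)
      · intro i j hij
        have h1 : ((i : ℕ) : ℂ) + 1 = ((j : ℕ) : ℂ) + 1 := mul_right_cancel₀ hμ hij
        have h2 : ((i : ℕ) : ℂ) = ((j : ℕ) : ℂ) := by linear_combination h1
        exact Fin.ext (Nat.cast_injective h2)
      · intro i
        exact ⟨hmem i, hpow _⟩
    have hcard := hli.fintype_card_le_finrank
    simp only [Fintype.card_fin] at hcard
    omega
  -- eigenvectors with nonzero eigenvalue lie in m
  have hEm : ∀ (μ : ℂ), μ ≠ 0 → ∀ a ∈ Module.End.eigenspace D μ, a ∈ m := by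
    intro μ hμ a ha
    by_contra ham
    have hsp : Ideal.span {a} = ⊤ := by
      by_contra hne
      exact ham (hloc _ hne (Ideal.subset_span rfl))
    have hu : IsUnit a := Ideal.span_singleton_eq_top.mp hsp
    obtain ⟨n, hn⟩ := hnil μ hμ a ha
    have h2 := hu.pow n
    rw [hn] at h2
    exact h01 (isUnit_zero_iff.mp h2).symm
  set S : Submodule ℂ A := ⨆ p : {μ : ℂ // μ ≠ 0}, Module.End.eigenspace D p.1 with hS
  have hSm : ∀ z ∈ S, z ∈ m := by
    intro z hz
    rw [hS] at hz
    refine Submodule.iSup_induction (motive := fun w => w ∈ m) _ hz ?_ m.zero_mem ?_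
    · rintro ⟨μ, hμ⟩ x hx; exact hEm μ hμ x hx
    · intro x y hx hy; exact m.add_mem hx hy
  have hSnil : ∀ z ∈ S, IsNilpotent z := by
    intro z hz
    rw [hS] at hz
    refine Submodule.iSup_induction (motive := fun w => IsNilpotent w) _ hz ?_ ⟨1, by simp⟩ ?_
    · rintro ⟨μ, hμ⟩ x hx; exact hnil μ hμ x hx
    · intro x y hx hy; exact Commute.isNilpotent_add (Commute.all x y) hx hy
  have hdec : ∀ z : A, ∃ c : ℂ, ∃ s ∈ S, z = c • (1 : A) + s := by
    intro z
    have htop : (⨆ μ : ℂ, Module.End.eigenspace D μ) ≤ Submodule.span ℂ {(1 : A)} ⊔ S := by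
      apply iSup_le
      intro μ
      by_cases hμ : μ = 0
      · subst hμ; rw [hzero]; exact le_sup_left
      · exact le_sup_of_le_right
          (le_iSup (fun p : {μ : ℂ // μ ≠ 0} => Module.End.eigenspace D p.1) ⟨μ, hμ⟩)
    have hz : z ∈ Submodule.span ℂ {(1 : A)} ⊔ S := htop (by rw [hdiag]; trivial)
    obtain ⟨u, hu, s, hs, hsum⟩ := Submodule.mem_sup.mp hz
    obtain ⟨c, hc⟩ := Submodule.mem_span_singleton.mp hu
    exact ⟨c, s, hs, by rw [← hsum, ← hc]⟩
  have hmS : ∀ z ∈ m, z ∈ S := by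
    intro z hz
    obtain ⟨c, s, hs, hsum⟩ := hdec z
    have hsm : s ∈ m := hSm s hs
    have hcm : c • (1 : A) ∈ m := by
      have h2 : z - s ∈ m := m.sub_mem hz hsm
      rwa [hsum, add_sub_cancel_right] at h2
    by_cases hc : c = 0
    · rw [hsum, hc, zero_smul, zero_add]; exact hs
    · exfalso
      apply hm
      rw [Ideal.eq_top_iff_one]
      have h2 := m.mul_mem_left (algebraMap ℂ A c⁻¹) hcm
      rwa [← Algebra.smul_def, smul_smul, inv_mul_cancel₀ hc, one_smul] at h2
  have hBam : ∀ a ∈ Module.End.eigenspace D ν, ∀ z ∈ m, B a z = 0 := by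
    intro a ha z hz
    have hzS := hmS z hz
    rw [hS] at hzS
    refine Submodule.iSup_induction (motive := fun w => B a w = 0) _ hzS ?_ (map_zero _) ?_
    · rintro ⟨μ, hμ⟩ x hx
      exact stmt11.orth B D ν hcompat (fun hcc => hμ (by linear_combination hcc)) ha hx
    · intro x y hx hy; rw [map_add, hx, hy, add_zero]
  let Annm : Submodule ℂ A :=
    { carrier := {a : A | ∀ x ∈ m, a * x = 0}
      add_mem' := fun {a b} ha hb x hx => by rw [add_mul, ha x hx, hb x hx, add_zero]
      zero_mem' := fun x hx => zero_mul x
      smul_mem' := fun c a ha x hx => by rw [smul_mul_assoc, ha x hx, smul_zero] }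
  have hEAnn : Module.End.eigenspace D ν ≤ Annm := by
    intro a ha
    intro x hx
    apply hnd
    intro y
    rw [hfrob]
    exact hBam a ha _ (m.mul_mem_right y hx)
  have hAnnB1 : ∀ a : A, (∀ x ∈ m, a * x = 0) → B a 1 = 0 → a = 0 := by
    intro a hAnn hB1
    apply hnd
    intro y
    obtain ⟨c, hc⟩ := hres y
    have h1 : B a (y - algebraMap ℂ A c) = 0 := by
      have h2 : a * (y - algebraMap ℂ A c) = 0 := hAnn _ hc
      have h3 := hfrob a (y - algebraMap ℂ A c) 1
      rw [h2, mul_one] at h3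
      simpa using h3.symm
    have h5 : B a (algebraMap ℂ A c) = 0 := by
      rw [Algebra.algebraMap_eq_smul_one, map_smul, hB1, smul_zero]
    have h6 : B a y - B a (algebraMap ℂ A c) = 0 := by rw [← map_sub]; exact h1
    rw [h5, sub_zero] at h6
    exact h6
  have dimAnn : finrank ℂ Annm ≤ 1 := by
    have hker : ∀ x : Annm, (B.flip 1).domRestrict Annm x = 0 → x = 0 := by
      intro x hx
      exact Subtype.ext (hAnnB1 x.1 x.2
        (by simpa [LinearMap.domRestrict_apply, LinearMap.flip_apply] using hx))
    have hinj : Function.Injective ((B.flip 1).domRestrict Annm) := by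
      rw [← LinearMap.ker_eq_bot]
      exact LinearMap.ker_eq_bot'.mpr hker
    calc finrank ℂ Annm ≤ finrank ℂ ℂ := LinearMap.finrank_le_finrank_of_injective hinj
      _ = 1 := Module.finrank_self ℂ
  have hEqAnn : Module.End.eigenspace D ν = Annm :=
    Submodule.eq_of_le_of_finrank_le hEAnn (by rw [dimEν]; exact dimAnn)
  refine ⟨fun lam μ a ha b hb => stmt11.prod D hder lam μ ha hb,
    fun lam μ h a ha b hb => stmt11.orth B D ν hcompat h ha hb,
    part3, dimEν, by rw [hEqAnn]; rfl, ?_⟩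
  -- minimality
  haveI : IsNoetherianRing A := isNoetherianRing_iff.mpr (isNoetherian_of_tower ℂ inferInstance)
  obtain ⟨K, hK⟩ := IsNoetherianRing.isNilpotent_nilradical A
  have hmK : m ^ K = ⊥ := by
    have h1 : m ≤ nilradical A := fun z hz => mem_nilradical.mpr (hSnil z (hmS z hz))
    have h2 := Ideal.pow_right_mono h1 K
    rw [hK] at h2
    exact le_bot_iff.mp (by simpa using h2)
  intro I hI
  obtain ⟨x, hxI, hx0⟩ := (Submodule.ne_bot_iff I).mp hI
  have hex : ∃ n, ∀ y ∈ m ^ n, x * y = 0 := by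
    refine ⟨K, ?_⟩
    rw [hmK]
    intro y hy
    rw [Submodule.mem_bot] at hy
    rw [hy, mul_zero]
  have hk := Nat.find_spec hex
  have hkpos : Nat.find hex ≠ 0 := by
    intro h0
    have h2 := hk 1 (by rw [h0, pow_zero, Ideal.one_eq_top]; trivial)
    rw [mul_one] at h2
    exact hx0 h2
  have hklt : Nat.find hex - 1 < Nat.find hex := Nat.pred_lt hkpos
  have hnot := Nat.find_min hex hklt
  push_neg at hnot
  obtain ⟨y, hy, hxy⟩ := hnot
  have hwAnn : x * y ∈ Annm := by
    intro z hz
    have hyz : y * z ∈ m ^ Nat.find hex := by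
      have h2 := Ideal.mul_mem_mul hy hz
      rwa [← pow_succ, show Nat.find hex - 1 + 1 = Nat.find hex by omega] at h2
    rw [mul_assoc]
    exact hk _ hyz
  intro a haset
  have haAnn : a ∈ Annm := hEqAnn ▸ haset
  have hAnnspan : Submodule.span ℂ {x * y} = Annm := by
    apply Submodule.eq_of_le_of_finrank_le
    · exact Submodule.span_le.mpr (Set.singleton_subset_iff.mpr hwAnn)
    · rw [finrank_span_singleton hxy]; exact dimAnn
  rw [← hAnnspan] at haAnn
  obtain ⟨c, hc⟩ := Submodule.mem_span_singleton.mp haAnn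
  rw [← hc]
  exact I.smul_of_tower_mem c (I.mul_mem_right y hxI)
end
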